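/- Let v ≥ 0 be in C^{1,1}(B) ∩ H²₀(B) on a ball B ⊂ ℝⁿ, let p ≥ 4 and B_R(x₀) ⊂ B. Then √v ∈ H^{1,p}(B_R(x₀)) and ∫_{B_R(x₀)} |∇√v|^p dx ≤ C ‖v‖_{C^{1,1}(B)}^{p/2}, where C is independent of v. -/

import Mathlib

open MeasureTheory Metric Set

/-- Second-order Taylor bound for a `C¹` function with `K`-Lipschitz derivative. -/
lemma taylor_bound_aux {n : ℕ} (v : EuclideanSpace ℝ (Fin n) → ℝ) (K : ℝ) (hK : 0 ≤ K)
    (hv : ContDiff ℝ 1 v)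
    (hlip : ∀ x y, ‖fderiv ℝ v x - fderiv ℝ v y‖ ≤ K * dist x y)
    (x h : EuclideanSpace ℝ (Fin n)) :
    v (x + h) ≤ v x + fderiv ℝ v x h + K * ‖h‖ ^ 2 := by
  have hdiff : ∀ z ∈ closedBall x ‖h‖, DifferentiableAt ℝ v z :=
    fun z _ => (hv.differentiable one_ne_zero) z
  have hbound : ∀ z ∈ closedBall x ‖h‖, ‖fderiv ℝ v z - fderiv ℝ v x‖ ≤ K * ‖h‖ := by
    intro z hz
    exact (hlip z x).trans (by gcongr; exact mem_closedBall.1 hz)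
  have hx : x ∈ closedBall x ‖h‖ := mem_closedBall_self (norm_nonneg h)
  have hy : x + h ∈ closedBall x ‖h‖ := by
    simp [mem_closedBall, dist_eq_norm]
  have key := (convex_closedBall x ‖h‖).norm_image_sub_le_of_norm_fderiv_le' hdiff hbound hx hy
  have h1 : x + h - x = h := by abel
  rw [h1] at key
  have := (abs_le.1 (by simpa [Real.norm_eq_abs] using key)).2
  nlinarith [this]

/-- Gradient estimate `‖∇v‖² ≤ 4 K v` for nonnegative `v` with `K`-Lipschitz derivative. -/
lemma grad_sq_le_aux {n : ℕ} (v : EuclideanSpace ℝ (Fin n) → ℝ) (K : ℝ) (hK : 0 < K)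
    (hv0 : ∀ x, 0 ≤ v x) (hv : ContDiff ℝ 1 v)
    (hlip : ∀ x y, ‖fderiv ℝ v x - fderiv ℝ v y‖ ≤ K * dist x y)
    (x : EuclideanSpace ℝ (Fin n)) :
    ‖fderiv ℝ v x‖ ^ 2 ≤ 4 * K * v x := by
  set g := fderiv ℝ v x with hg
  set w := (InnerProductSpace.toDual ℝ (EuclideanSpace ℝ (Fin n))).symm g with hw
  have hwnorm : ‖w‖ = ‖g‖ := LinearIsometryEquiv.norm_map _ g
  have hgw : g w = ‖g‖ ^ 2 := by
    have h1 : inner ℝ w w = g w := InnerProductSpace.toDual_symm_apply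
    rw [← h1, real_inner_self_eq_norm_sq, hwnorm]
  set h : EuclideanSpace ℝ (Fin n) := (-(1 / (2 * K))) • w with hh
  have htay := taylor_bound_aux v K hK.le hv hlip x h
  have hgh : g h = -(1 / (2 * K)) * ‖g‖ ^ 2 := by
    rw [hh, ContinuousLinearMap.map_smul, smul_eq_mul, hgw]
  have hnh : ‖h‖ ^ 2 = (1 / (2 * K)) ^ 2 * ‖g‖ ^ 2 := by
    rw [hh, norm_smul, hwnorm, mul_pow, Real.norm_eq_abs, sq_abs, neg_sq]
  have h0 := hv0 (x + h)
  rw [hgh, hnh] at htay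
  have hKne : K ≠ 0 := hK.ne'
  have key : v x + -(1 / (2 * K)) * ‖g‖ ^ 2 + K * ((1 / (2 * K)) ^ 2 * ‖g‖ ^ 2)
      = v x - ‖g‖ ^ 2 / (4 * K) := by
    field_simp
    ring
  rw [key] at htay
  have h5 : ‖g‖ ^ 2 / (4 * K) ≤ v x := by linarith [h0.trans htay]
  calc ‖g‖ ^ 2 = ‖g‖ ^ 2 / (4 * K) * (4 * K) := by field_simp
    _ ≤ v x * (4 * K) := by
        apply mul_le_mul_of_nonneg_right h5
        positivity
    _ = 4 * K * v x := by ring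

/-- Pointwise bound `‖∇√v‖ ≤ √K`. -/
lemma fderiv_sqrt_le_aux {n : ℕ} (v : EuclideanSpace ℝ (Fin n) → ℝ) (K : ℝ) (hK : 0 ≤ K)
    (hv0 : ∀ x, 0 ≤ v x) (hv : ContDiff ℝ 1 v) (hvK : ∀ x, |v x| ≤ K)
    (hlip : ∀ x y, ‖fderiv ℝ v x - fderiv ℝ v y‖ ≤ K * dist x y)
    (x : EuclideanSpace ℝ (Fin n)) :
    ‖fderiv ℝ (fun y => Real.sqrt (v y)) x‖ ≤ Real.sqrt K := by
  rcases hK.eq_or_lt with hK0 | hKpos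
  · -- K = 0 : v ≡ 0
    have hv00 : ∀ y, v y = 0 := fun y => le_antisymm (by simpa [← hK0] using (abs_le.1 (hvK y)).2) (hv0 y)
    have : (fun y => Real.sqrt (v y)) = fun _ => (0 : ℝ) := by
      funext y; rw [hv00 y, Real.sqrt_zero]
    rw [this, fderiv_fun_const]
    simp [Real.sqrt_nonneg]
  · by_cases hx : v x = 0
    · -- zero point: use the converse mean value inequality
      apply norm_fderiv_le_of_lip' ℝ (Real.sqrt_nonneg K)
      have hmin : IsLocalMin v x := Filter.Eventually.of_forall fun y => hx ▸ hv0 y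
      have hDz : fderiv ℝ v x = 0 := hmin.fderiv_eq_zero
      refine Filter.Eventually.of_forall fun y => ?_
      have htay := taylor_bound_aux v K hK hv hlip x (y - x)
      rw [hDz] at htay
      have h1 : x + (y - x) = y := by abel
      rw [h1] at htay
      simp only [ContinuousLinearMap.zero_apply, add_zero, hx, zero_add] at htay
      have h2 : Real.sqrt (v y) ≤ Real.sqrt K * ‖y - x‖ := by
        calc Real.sqrt (v y) ≤ Real.sqrt (K * ‖y - x‖ ^ 2) := Real.sqrt_le_sqrt htay
        _ = Real.sqrt K * ‖y - x‖ := by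
            rw [Real.sqrt_mul hK, Real.sqrt_sq (norm_nonneg _)]
      simpa [hx, Real.norm_eq_abs, abs_of_nonneg (Real.sqrt_nonneg (v y))] using h2
    · -- positive point
      have hpos : 0 < v x := (hv0 x).lt_of_ne (Ne.symm hx)
      have hD : HasFDerivAt v (fderiv ℝ v x) x := ((hv.differentiable one_ne_zero) x).hasFDerivAt
      have hF := hD.sqrt hx
      rw [hF.fderiv, norm_smul, Real.norm_eq_abs]
      have hs : 0 < Real.sqrt (v x) := Real.sqrt_pos.2 hpos
      rw [abs_of_pos (by positivity)]
      have h2 : ‖fderiv ℝ v x‖ ^ 2 ≤ 4 * K * v x := grad_sq_le_aux v K hKpos hv0 hv hlip x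
      have hsq : Real.sqrt K ^ 2 = K := Real.sq_sqrt hK
      have hsq2 : Real.sqrt (v x) ^ 2 = v x := Real.sq_sqrt hpos.le
      rw [div_mul_eq_mul_div, one_mul, div_le_iff₀ (by positivity)]
      have h3 : ‖fderiv ℝ v x‖ = Real.sqrt (‖fderiv ℝ v x‖ ^ 2) :=
        (Real.sqrt_sq (norm_nonneg _)).symm
      rw [h3]
      calc Real.sqrt (‖fderiv ℝ v x‖ ^ 2) ≤ Real.sqrt (4 * K * v x) := Real.sqrt_le_sqrt h2
        _ = Real.sqrt K * (2 * Real.sqrt (v x)) := by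
            have h4 : 4 * K * v x = (Real.sqrt K * (2 * Real.sqrt (v x))) ^ 2 := by
              rw [mul_pow, mul_pow, hsq, hsq2]
              ring
            rw [h4, Real.sqrt_sq (by positivity)]

/-- Embedding theorem for `√v` (Theorem 4.5 of the paper): let `v ≥ 0` be in
`C^{1,1}(B) ∩ H²₀(B)` on a ball `B`, let `p ≥ 4` and `B_R(x₀) ⊆ B`. Then
`√v ∈ H^{1,p}(B_R(x₀))` with `∫_{B_R(x₀)} |∇√v|^p ≤ C ‖v‖_{C^{1,1}(B)}^{p/2}`, where the
constant `C` is independent of `v`; the `C^{1,1}` norm is encoded by a bound `K` on `|v|`,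
`|∇v|` and the Lipschitz constant of `∇v`, and the (a.e. defined) gradient of `√v` by
`fderiv` (with junk value `0` at points of nondifferentiability). -/
theorem sqrt_embedding
    (n : ℕ) (x₀B : EuclideanSpace ℝ (Fin n)) (RB : ℝ) (hRB : 0 < RB)
    (p : ℝ) (hp : 4 ≤ p)
    (x₀ : EuclideanSpace ℝ (Fin n)) (R : ℝ) (hR : 0 < R)
    (hRin : Metric.ball x₀ R ⊆ Metric.ball x₀B RB) :
    ∃ C : ℝ, 0 < C ∧
      ∀ (v : EuclideanSpace ℝ (Fin n) → ℝ) (K : ℝ), 0 ≤ K →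
        (∀ x, 0 ≤ v x) → ContDiff ℝ 1 v → HasCompactSupport v →
        tsupport v ⊆ Metric.ball x₀B RB →
        (∀ x, |v x| ≤ K) → (∀ x, ‖fderiv ℝ v x‖ ≤ K) →
        (∀ x y, ‖fderiv ℝ v x - fderiv ℝ v y‖ ≤ K * dist x y) →
        (MemLp (fun x => fderiv ℝ (fun y => Real.sqrt (v y)) x)
          (ENNReal.ofReal p) (volume.restrict (Metric.ball x₀ R)) ∧
        ∫ x in Metric.ball x₀ R, ‖fderiv ℝ (fun y => Real.sqrt (v y)) x‖ ^ p
          ≤ C * K ^ (p / 2)) := by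
  refine ⟨(volume (Metric.ball x₀ R)).toReal + 1, by positivity, ?_⟩
  intro v K hK hv0 hv hcs hsupp hvK hgK hlip
  have hbd : ∀ x, ‖fderiv ℝ (fun y => Real.sqrt (v y)) x‖ ≤ Real.sqrt K :=
    fderiv_sqrt_le_aux v K hK hv0 hv hvK hlip
  haveI : IsFiniteMeasure (volume.restrict (Metric.ball x₀ R)) :=
    ⟨by rw [Measure.restrict_apply_univ]; exact measure_ball_lt_top⟩
  have hmeas : AEStronglyMeasurable (fun x => fderiv ℝ (fun y => Real.sqrt (v y)) x)
      (volume.restrict (Metric.ball x₀ R)) :=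
    (measurable_fderiv ℝ _).aestronglyMeasurable
  have hmemtop : MemLp (fun x => fderiv ℝ (fun y => Real.sqrt (v y)) x) ⊤
      (volume.restrict (Metric.ball x₀ R)) :=
    memLp_top_of_bound hmeas _ (Filter.Eventually.of_forall hbd)
  have hmem : MemLp (fun x => fderiv ℝ (fun y => Real.sqrt (v y)) x)
      (ENNReal.ofReal p) (volume.restrict (Metric.ball x₀ R)) :=
    hmemtop.mono_exponent le_top
  refine ⟨hmem, ?_⟩
  have hp0 : (0 : ℝ) < p := by linarith
  have hple : ∀ x, ‖fderiv ℝ (fun y => Real.sqrt (v y)) x‖ ^ p ≤ K ^ (p / 2) := by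
    intro x
    calc ‖fderiv ℝ (fun y => Real.sqrt (v y)) x‖ ^ p ≤ (Real.sqrt K) ^ p :=
          Real.rpow_le_rpow (norm_nonneg _) (hbd x) hp0.le
      _ = K ^ (p / 2) := by
          rw [Real.sqrt_eq_rpow, ← Real.rpow_mul hK]
          congr 1
          ring
  have hint : IntegrableOn (fun x => ‖fderiv ℝ (fun y => Real.sqrt (v y)) x‖ ^ p)
      (Metric.ball x₀ R) := by
    have := hmem.integrable_norm_rpow (ENNReal.ofReal_pos.2 hp0).ne' (by simp)
    simpa [IntegrableOn, ENNReal.toReal_ofReal hp0.le] using this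
  have hconst : IntegrableOn (fun _ : EuclideanSpace ℝ (Fin n) => K ^ (p / 2))
      (Metric.ball x₀ R) :=
    integrableOn_const measure_ball_lt_top.ne
  calc ∫ x in Metric.ball x₀ R, ‖fderiv ℝ (fun y => Real.sqrt (v y)) x‖ ^ p
      ≤ ∫ _x in Metric.ball x₀ R, K ^ (p / 2) :=
        setIntegral_mono_on hint hconst measurableSet_ball fun x _ => hple x
    _ = (volume (Metric.ball x₀ R)).toReal * K ^ (p / 2) := by
        rw [setIntegral_const, smul_eq_mul, measureReal_def]
    _ ≤ ((volume (Metric.ball x₀ R)).toReal + 1) * K ^ (p / 2) := by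
        have h1 : (0 : ℝ) ≤ K ^ (p / 2) := Real.rpow_nonneg hK _
        nlinarith
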